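/- Let τ₀ > 0 and let w be a holomorphic injective map on the upper half-plane ℍ = {z : Im z > 0} such that w(ℍ) ⊆ ℍ, the image w(ℍ) contains the half-plane {z : Im z > τ₀}, and w is normalized at infinity so that w(iy)/(iy) → 1 as y → +∞. Then for every z ∈ ℍ one has 0 ≤ Im w(z) − Im z ≤ τ₀. -/

import Mathlib

open Filter Set

open Complex Metric Function Topology



lemma nsq_sub_conj (a b : ℂ) :
    normSq (a - (starRingEnd ℂ) b) - normSq (a - b) = 4 * a.im * b.im := by
  simp [normSq_apply, sub_re, sub_im, conj_re, conj_im]; ring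

lemma im_pos_ne_zero {a : ℂ} (ha : 0 < a.im) : a ≠ 0 := by
  intro h; rw [h] at ha; simp at ha

lemma sub_conj_ne {a b : ℂ} (ha : 0 < a.im) (hb : 0 < b.im) :
    a - (starRingEnd ℂ) b ≠ 0 := by
  intro h
  have : (a - (starRingEnd ℂ) b).im = 0 := by rw [h]; simp
  simp [sub_im, conj_im] at this
  linarith

lemma cayley_im {p u : ℂ} (hp : 0 < p.im) (hu : ‖u‖ < 1) :
    0 < ((p - (starRingEnd ℂ) p * u) / (1 - u)).im := by
  have hu' : normSq u < 1 := by
    have := Complex.sq_norm u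
    nlinarith [norm_nonneg u]
  have hw : (1 : ℂ) - u ≠ 0 := by
    intro h
    have : u = 1 := by linear_combination -h
    rw [this] at hu; simp at hu
  have hns : 0 < normSq (1 - u) := normSq_pos.2 hw
  rw [Complex.div_im, div_sub_div_same]
  apply div_pos _ hns
  have : (p - (starRingEnd ℂ) p * u).im * (1 - u).re - (p - (starRingEnd ℂ) p * u).re * (1 - u).im
      = p.im * (1 - normSq u) := by
    simp [sub_re, sub_im, mul_re, mul_im, conj_re, conj_im, normSq_apply]; ring
  rw [this]
  nlinarith

lemma cayley_abs_lt {p ζ : ℂ} (hp : 0 < p.im) (hζ : 0 < ζ.im) :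
    ‖(ζ - p) / (ζ - (starRingEnd ℂ) p)‖ < 1 := by
  have hden : ζ - (starRingEnd ℂ) p ≠ 0 := sub_conj_ne hζ hp
  rw [norm_div, div_lt_one (by simpa using hden)]
  have h4 : 0 < 4 * ζ.im * p.im := by positivity
  have := nsq_sub_conj ζ p
  have h1 : normSq (ζ - p) < normSq (ζ - (starRingEnd ℂ) p) := by linarith
  rw [Complex.norm_def, Complex.norm_def]
  exact Real.sqrt_lt_sqrt (normSq_nonneg _) h1

lemma cayley_left_inv {p b : ℂ} (hp : 0 < p.im) (hb : 0 < b.im) :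
    (p - (starRingEnd ℂ) p * ((b - p) / (b - (starRingEnd ℂ) p))) /
      (1 - (b - p) / (b - (starRingEnd ℂ) p)) = b := by
  have hden : b - (starRingEnd ℂ) p ≠ 0 := sub_conj_ne hb hp
  have hpc : p - (starRingEnd ℂ) p ≠ 0 := by
    intro h
    have : (p - (starRingEnd ℂ) p).im = 0 := by rw [h]; simp
    simp [sub_im, conj_im] at this; linarith
  have h1 : (1 : ℂ) - (b - p) / (b - (starRingEnd ℂ) p) = (p - (starRingEnd ℂ) p)/(b - (starRingEnd ℂ) p) := by
    field_simp
    ring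
  rw [h1]
  field_simp
  ring


lemma schwarz_pick_ratio {φ : ℂ → ℂ} (hd : DifferentiableOn ℂ φ {z : ℂ | 0 < z.im})
    (hm : MapsTo φ {z : ℂ | 0 < z.im} {z : ℂ | 0 < z.im}) {a b : ℂ}
    (ha : 0 < a.im) (hb : 0 < b.im) :
    normSq (φ b - φ a) * normSq (b - (starRingEnd ℂ) a) ≤
      normSq (b - a) * normSq (φ b - (starRingEnd ℂ) (φ a)) := by
  have hα : 0 < (φ a).im := hm ha
  set Tv : ℂ → ℂ := fun u => (a - (starRingEnd ℂ) a * u) / (1 - u) with hTv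
  set g : ℂ → ℂ := fun u =>
    (φ (Tv u) - φ a) / (φ (Tv u) - (starRingEnd ℂ) (φ a)) with hg
  have hTv_mem : ∀ u ∈ ball (0 : ℂ) 1, 0 < (Tv u).im := fun u hu =>
    cayley_im ha (mem_ball_zero_iff.1 hu)
  have hone : ∀ u ∈ ball (0 : ℂ) 1, (1 : ℂ) - u ≠ 0 := by
    intro u hu h
    have : u = 1 := by linear_combination -h
    rw [this] at hu
    simp at hu
  have hTv_diff : DifferentiableOn ℂ Tv (ball (0 : ℂ) 1) := by
    apply DifferentiableOn.div
    · exact (differentiableOn_const _).sub ((differentiableOn_const _).mul differentiableOn_id)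
    · exact (differentiableOn_const _).sub differentiableOn_id
    · exact hone
  have hφTv : DifferentiableOn ℂ (fun u => φ (Tv u)) (ball (0 : ℂ) 1) :=
    hd.comp hTv_diff fun u hu => hTv_mem u hu
  have hg_diff : DifferentiableOn ℂ g (ball (0 : ℂ) 1) := by
    apply DifferentiableOn.div
    · exact hφTv.sub (differentiableOn_const _)
    · exact hφTv.sub (differentiableOn_const _)
    · exact fun u hu => sub_conj_ne (hm (hTv_mem u hu)) hα
  have hg_maps : MapsTo g (ball (0 : ℂ) 1) (ball (0 : ℂ) 1) := by
    intro u hu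
    exact mem_ball_zero_iff.2 (cayley_abs_lt hα (hm (hTv_mem u hu)))
  have hg0 : g 0 = 0 := by
    have : Tv 0 = a := by simp [hTv]
    simp [hg, this]
  set z : ℂ := (b - a) / (b - (starRingEnd ℂ) a) with hzdef
  have hz : ‖z‖ < 1 := cayley_abs_lt ha hb
  have key := Complex.norm_le_norm_of_mapsTo_ball hg_diff (hg_maps.mono_right ball_subset_closedBall) hg0 hz
  have hTvz : Tv z = b := cayley_left_inv ha hb
  rw [hg] at key
  simp only [hTvz] at key
  -- key : abs ((φ b - φ a)/(φ b - conj (φ a))) ≤ abs ((b-a)/(b - conj a))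
  have hd1 : (0:ℝ) < ‖φ b - (starRingEnd ℂ) (φ a)‖ := by
    simpa [norm_pos_iff] using sub_conj_ne (hm hb) hα
  have hd2 : (0:ℝ) < ‖b - (starRingEnd ℂ) a‖ := by
    simpa [norm_pos_iff] using sub_conj_ne hb ha
  rw [hzdef, norm_div, norm_div, div_le_div_iff₀ hd1 hd2] at key
  have e1 := Complex.sq_norm (φ b - φ a)
  have e2 := Complex.sq_norm (b - (starRingEnd ℂ) a)
  have e3 := Complex.sq_norm (b - a)
  have e4 := Complex.sq_norm (φ b - (starRingEnd ℂ) (φ a))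
  nlinarith [norm_nonneg (φ b - φ a), norm_nonneg (b - a),
    norm_nonneg (b - (starRingEnd ℂ) a),
    norm_nonneg (φ b - (starRingEnd ℂ) (φ a)),
    mul_le_mul key key (by positivity) (by positivity)]

lemma schwarz_pick_prod {φ : ℂ → ℂ} (hd : DifferentiableOn ℂ φ {z : ℂ | 0 < z.im})
    (hm : MapsTo φ {z : ℂ | 0 < z.im} {z : ℂ | 0 < z.im}) {a b : ℂ}
    (ha : 0 < a.im) (hb : 0 < b.im) :
    a.im * b.im * normSq (φ b - (starRingEnd ℂ) (φ a)) ≤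
      (φ a).im * (φ b).im * normSq (b - (starRingEnd ℂ) a) := by
  have h1 := schwarz_pick_ratio hd hm ha hb
  have e1 := nsq_sub_conj (φ b) (φ a)
  have e2 := nsq_sub_conj b a
  have q1 : 4 * (a.im * b.im * normSq (φ b - (starRingEnd ℂ) (φ a)))
      = normSq (b - (starRingEnd ℂ) a) * normSq (φ b - (starRingEnd ℂ) (φ a))
        - normSq (b - a) * normSq (φ b - (starRingEnd ℂ) (φ a)) := by
    linear_combination (-(normSq (φ b - (starRingEnd ℂ) (φ a)))) * e2
  have q2 : 4 * ((φ a).im * (φ b).im * normSq (b - (starRingEnd ℂ) a))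
      = normSq (b - (starRingEnd ℂ) a) * normSq (φ b - (starRingEnd ℂ) (φ a))
        - normSq (φ b - φ a) * normSq (b - (starRingEnd ℂ) a) := by
    linear_combination (-(normSq (b - (starRingEnd ℂ) a))) * e1
  linarith


lemma im_I_mul (y : ℝ) : (Complex.I * y).im = y := by simp

lemma im_I_mul_pos {y : ℝ} (hy : 0 < y) : 0 < (Complex.I * y).im := by
  rw [im_I_mul]; exact hy

lemma tendsto_inv_coe : Tendsto (fun y : ℝ => ((y : ℂ))⁻¹) atTop (nhds 0) := by
  have h := tendsto_inv_atTop_zero (𝕜 := ℝ)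
  have h2 := (Complex.continuous_ofReal.tendsto 0).comp h
  simpa [Function.comp_def] using h2

lemma julia_infty {φ : ℂ → ℂ} (hd : DifferentiableOn ℂ φ {z : ℂ | 0 < z.im})
    (hm : MapsTo φ {z : ℂ | 0 < z.im} {z : ℂ | 0 < z.im})
    (hnorm : Tendsto (fun y : ℝ => φ (Complex.I * y) / (Complex.I * y)) atTop (nhds 1)) :
    ∀ z : ℂ, 0 < z.im → z.im ≤ (φ z).im := by
  intro z hz
  set c : ℝ → ℂ := fun y => φ (Complex.I * y) / (Complex.I * y) with hc
  set D : ℝ → ℂ := fun y => (φ z - (starRingEnd ℂ) (φ (Complex.I * y))) / (y : ℂ) with hD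
  set E : ℝ → ℂ := fun y => (z + Complex.I * y) / (y : ℂ) with hE
  set F : ℝ → ℝ := fun y => (c y * Complex.I).im with hF
  have hφz : 0 < (φ z).im := hm hz
  -- φ (I y)/y → I
  have hφy : Tendsto (fun y : ℝ => φ (Complex.I * y) / (y : ℂ)) atTop (nhds Complex.I) := by
    have h1 : Tendsto (fun y : ℝ => c y * Complex.I) atTop (nhds Complex.I) := by
      simpa using hnorm.mul_const Complex.I
    refine h1.congr' ?_
    filter_upwards [eventually_gt_atTop (0 : ℝ)] with y hy
    have hy' : (y : ℂ) ≠ 0 := by exact_mod_cast hy.ne'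
    rw [hc]
    field_simp
  have hconj : Tendsto (fun y : ℝ => (starRingEnd ℂ) (φ (Complex.I * y)) / (y : ℂ)) atTop
      (nhds (-Complex.I)) := by
    have h1 : Tendsto (fun y : ℝ => (starRingEnd ℂ) (φ (Complex.I * y) / (y : ℂ))) atTop
        (nhds ((starRingEnd ℂ) Complex.I)) := (Complex.continuous_conj.tendsto _).comp hφy
    simp only [map_div₀, Complex.conj_ofReal, Complex.conj_I] at h1
    exact h1
  have hDlim : Tendsto D atTop (nhds Complex.I) := by
    have h1 : Tendsto (fun y : ℝ => φ z * ((y : ℂ))⁻¹) atTop (nhds 0) := by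
      simpa using tendsto_inv_coe.const_mul (φ z)
    have h2 := h1.sub hconj
    simp only [zero_sub, neg_neg] at h2
    refine h2.congr fun y => ?_
    simp [hD, sub_div, div_eq_mul_inv, sub_mul]
  have hElim : Tendsto E atTop (nhds Complex.I) := by
    have h1 : Tendsto (fun y : ℝ => z * ((y : ℂ))⁻¹ + Complex.I) atTop (nhds Complex.I) := by
      simpa using (tendsto_inv_coe.const_mul z).add_const Complex.I
    refine h1.congr' ?_
    filter_upwards [eventually_gt_atTop (0 : ℝ)] with y hy
    have hy' : (y : ℂ) ≠ 0 := by exact_mod_cast hy.ne'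
    rw [hE]
    field_simp
  have hFlim : Tendsto F atTop (nhds 1) := by
    have h1 : Tendsto (fun y : ℝ => c y * Complex.I) atTop (nhds Complex.I) := by
      simpa using hnorm.mul_const Complex.I
    have h2 := (Complex.continuous_im.tendsto _).comp h1
    exact h2
  have hL : Tendsto (fun y : ℝ => z.im * normSq (D y)) atTop (nhds (z.im * 1)) := by
    have := (Complex.continuous_normSq.tendsto _).comp hDlim
    simpa using this.const_mul z.im
  have hR : Tendsto (fun y : ℝ => (φ z).im * (F y * normSq (E y))) atTop
      (nhds ((φ z).im * (1 * 1))) := by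
    have h1 := (Complex.continuous_normSq.tendsto _).comp hElim
    have h2 : Tendsto (fun y : ℝ => normSq (E y)) atTop (nhds 1) := by simpa [Function.comp_def] using h1
    exact (hFlim.mul h2).const_mul _
  have hle : ∀ᶠ y : ℝ in atTop, z.im * normSq (D y) ≤ (φ z).im * (F y * normSq (E y)) := by
    filter_upwards [eventually_gt_atTop (0 : ℝ)] with y hy
    have hy' : (y : ℂ) ≠ 0 := by exact_mod_cast hy.ne'
    have hIy : 0 < (Complex.I * (y : ℂ)).im := im_I_mul_pos hy
    have hIy' : Complex.I * (y : ℂ) ≠ 0 := im_pos_ne_zero hIy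
    have SP := schwarz_pick_prod hd hm (a := Complex.I * y) (b := z) hIy hz
    have nsq1 : normSq (φ z - (starRingEnd ℂ) (φ (Complex.I * y))) = y ^ 2 * normSq (D y) := by
      have : φ z - (starRingEnd ℂ) (φ (Complex.I * y)) = (y : ℂ) * D y := by
        rw [hD]; field_simp
      rw [this, normSq_mul, normSq_ofReal]; ring
    have nsq2 : normSq (z - (starRingEnd ℂ) (Complex.I * y)) = y ^ 2 * normSq (E y) := by
      have h0 : (starRingEnd ℂ) (Complex.I * (y : ℂ)) = -(Complex.I * y) := by
        simp [Complex.conj_I]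
      have : z - (starRingEnd ℂ) (Complex.I * y) = (y : ℂ) * E y := by
        rw [h0, hE]; field_simp; ring
      rw [this, normSq_mul, normSq_ofReal]; ring
    have imφ : (φ (Complex.I * y)).im = y * F y := by
      have h1 : φ (Complex.I * y) = (y : ℂ) * (c y * Complex.I) := by
        rw [hc]; field_simp
      rw [hF, h1]; simp [Complex.mul_im]
    rw [nsq1, nsq2, imφ, im_I_mul] at SP
    have h3 : (0 : ℝ) < y ^ 3 := by positivity
    have key : y ^ 3 * (z.im * normSq (D y)) ≤ y ^ 3 * ((φ z).im * (F y * normSq (E y))) := by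
      nlinarith [SP]
    exact (mul_le_mul_iff_right₀ h3).mp key
  have := le_of_tendsto_of_tendsto hL hR hle
  simpa using this


section Inv
variable {τ₀ : ℝ} {w : ℂ → ℂ}

lemma H_open : IsOpen {z : ℂ | 0 < z.im} := isOpen_lt continuous_const Complex.continuous_im
lemma D_open (τ₀ : ℝ) : IsOpen {z : ℂ | τ₀ < z.im} := isOpen_lt continuous_const Complex.continuous_im

lemma hv_right (cover : {z : ℂ | τ₀ < z.im} ⊆ w '' {z : ℂ | 0 < z.im}) : ∀ ζ ∈ {z : ℂ | τ₀ < z.im},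
    w (invFunOn w {z : ℂ | 0 < z.im} ζ) = ζ ∧ invFunOn w {z : ℂ | 0 < z.im} ζ ∈ {z : ℂ | 0 < z.im} := by
  intro ζ hζ
  obtain ⟨x, hx, hwx⟩ := cover hζ
  exact ⟨Function.invFunOn_eq ⟨x, hx, hwx⟩, Function.invFunOn_mem ⟨x, hx, hwx⟩⟩

lemma hv_left (inj : Set.InjOn w {z : ℂ | 0 < z.im}) : ∀ z ∈ {z : ℂ | 0 < z.im}, invFunOn w {z : ℂ | 0 < z.im} (w z) = z :=
  fun z hz => inj.leftInvOn_invFunOn hz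

lemma no_const (inj : Set.InjOn w {z : ℂ | 0 < z.im}) : ∀ z₀ ∈ {z : ℂ | 0 < z.im}, ¬(∀ᶠ z in nhds z₀, w z = w z₀) := by
  intro z₀ hz₀ h
  obtain ⟨ε, hε, hball⟩ := Metric.eventually_nhds_iff.1 (h.and (H_open.eventually_mem hz₀))
  set z₁ : ℂ := z₀ + ((ε / 2 : ℝ) : ℂ) with hz₁
  have hdist : dist z₁ z₀ < ε := by
    rw [Complex.dist_eq, hz₁]
    have he : z₀ + ((ε / 2 : ℝ) : ℂ) - z₀ = ((ε / 2 : ℝ) : ℂ) := by ring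
    rw [he, Complex.norm_real, Real.norm_eq_abs, abs_of_pos (by linarith : (0:ℝ) < ε / 2)]
    linarith
  obtain ⟨heq, hmem⟩ := hball hdist
  have h2 := inj hmem hz₀ heq
  rw [hz₁] at h2
  have h3 : ((ε / 2 : ℝ) : ℂ) = 0 := by linear_combination h2
  rw [Complex.ofReal_eq_zero] at h3
  linarith

lemma cont_v (hol : DifferentiableOn ℂ w {z : ℂ | 0 < z.im}) (inj : Set.InjOn w {z : ℂ | 0 < z.im}) (cover : {z : ℂ | τ₀ < z.im} ⊆ w '' {z : ℂ | 0 < z.im}) : ∀ ζ₀ ∈ {z : ℂ | τ₀ < z.im}, ContinuousAt (invFunOn w {z : ℂ | 0 < z.im}) ζ₀ := by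
  intro ζ₀ hζ₀
  set v := invFunOn w {z : ℂ | 0 < z.im} with hv
  obtain ⟨hwv, hvH⟩ := hv_right cover ζ₀ hζ₀
  have hAn : AnalyticAt ℂ w (v ζ₀) := hol.analyticAt (H_open.mem_nhds hvH)
  rcases hAn.eventually_constant_or_nhds_le_map_nhds with hconst | hopen
  · exact absurd hconst (no_const inj _ hvH)
  · rw [ContinuousAt, Filter.tendsto_def]
    intro s hs
    have hs' : s ∩ {z : ℂ | 0 < z.im} ∈ nhds (v ζ₀) := inter_mem hs (H_open.mem_nhds hvH)
    have himg : w '' (s ∩ {z : ℂ | 0 < z.im}) ∈ nhds (w (v ζ₀)) := hopen (image_mem_map hs')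
    rw [hwv] at himg
    have hN : w '' (s ∩ {z : ℂ | 0 < z.im}) ∩ {z : ℂ | τ₀ < z.im} ∈ nhds ζ₀ :=
      inter_mem himg ((D_open τ₀).mem_nhds hζ₀)
    refine mem_of_superset hN ?_
    rintro ζ ⟨⟨x, ⟨hxs, hxH⟩, hwx⟩, hζD⟩
    have h1 := hv_left inj x hxH
    rw [hwx] at h1
    rw [mem_preimage, hv, h1]
    exact hxs

lemma diffat_of_deriv (hol : DifferentiableOn ℂ w {z : ℂ | 0 < z.im}) (inj : Set.InjOn w {z : ℂ | 0 < z.im}) (cover : {z : ℂ | τ₀ < z.im} ⊆ w '' {z : ℂ | 0 < z.im}) : ∀ ζ ∈ {z : ℂ | τ₀ < z.im},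
    deriv w (invFunOn w {z : ℂ | 0 < z.im} ζ) ≠ 0 →
    DifferentiableAt ℂ (invFunOn w {z : ℂ | 0 < z.im}) ζ := by
  intro ζ hζ hne
  set v := invFunOn w {z : ℂ | 0 < z.im} with hv
  obtain ⟨hwv, hvH⟩ := hv_right cover ζ hζ
  have hcont := cont_v hol inj cover ζ hζ
  have hdw : HasDerivAt w (deriv w (v ζ)) (v ζ) :=
    (hol.differentiableAt (H_open.mem_nhds hvH)).hasDerivAt
  have hfg : ∀ᶠ ξ in nhds ζ, w (v ξ) = ξ := by
    filter_upwards [(D_open τ₀).eventually_mem hζ] with ξ hξ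
    exact (hv_right cover ξ hξ).1
  exact (HasDerivAt.of_local_left_inverse hcont hdw hne hfg).differentiableAt

lemma diff_v (hol : DifferentiableOn ℂ w {z : ℂ | 0 < z.im}) (inj : Set.InjOn w {z : ℂ | 0 < z.im}) (cover : {z : ℂ | τ₀ < z.im} ⊆ w '' {z : ℂ | 0 < z.im}) : ∀ ζ₀ ∈ {z : ℂ | τ₀ < z.im},
    DifferentiableAt ℂ (invFunOn w {z : ℂ | 0 < z.im}) ζ₀ := by
  intro ζ₀ hζ₀
  set v := invFunOn w {z : ℂ | 0 < z.im} with hv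
  obtain ⟨hwv, hvH⟩ := hv_right cover ζ₀ hζ₀
  have hcont := cont_v hol inj cover ζ₀ hζ₀
  by_cases hne : deriv w (v ζ₀) ≠ 0
  · exact diffat_of_deriv hol inj cover ζ₀ hζ₀ hne
  have hAn : AnalyticAt ℂ (deriv w) (v ζ₀) :=
    ((hol.analyticOnNhd H_open).deriv) _ hvH
  rcases hAn.eventually_eq_zero_or_eventually_ne_zero with hzero | hnz
  · exfalso
    obtain ⟨ε, hε, hball⟩ := Metric.eventually_nhds_iff.1 (hzero.and (H_open.eventually_mem hvH))
    apply no_const inj (v ζ₀) hvH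
    have hsub : ball (v ζ₀) ε ⊆ {z : ℂ | 0 < z.im} := fun x hx => (hball (mem_ball.1 hx)).2
    have hconv : Convex ℝ (ball (v ζ₀) ε) := convex_ball _ _
    have hdiff : DifferentiableOn ℂ w (ball (v ζ₀) ε) := hol.mono hsub
    have hfd : ∀ x ∈ ball (v ζ₀) ε, fderivWithin ℂ w (ball (v ζ₀) ε) x = 0 := by
      intro x hx
      have hx' : DifferentiableAt ℂ w x := hol.differentiableAt (H_open.mem_nhds (hsub hx))
      have h0 : deriv w x = 0 := (hball (mem_ball.1 hx)).1
      have hF : HasFDerivAt w (0 : ℂ →L[ℂ] ℂ) x := by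
        have h1 := hx'.hasDerivAt
        rw [h0] at h1
        have h2 := h1.hasFDerivAt
        simpa [ContinuousLinearMap.toSpanSingleton_zero] using h2
      rw [fderivWithin_of_isOpen isOpen_ball hx]
      exact hF.fderiv
    have hcv : ∀ x ∈ ball (v ζ₀) ε, ∀ y ∈ ball (v ζ₀) ε, w x = w y := fun x hx y hy =>
      hconv.is_const_of_fderivWithin_eq_zero hdiff hfd hx hy
    filter_upwards [ball_mem_nhds (v ζ₀) hε] with x hx
    exact hcv x hx (v ζ₀) (mem_ball_self hε)
  · have hev : ∀ᶠ ξ in nhdsWithin ζ₀ {ζ₀}ᶜ, DifferentiableAt ℂ v ξ := by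
      have h1 : ∀ᶠ ξ in nhds ζ₀,
          ξ ∈ {z : ℂ | τ₀ < z.im} ∧ (v ξ ≠ v ζ₀ → deriv w (v ξ) ≠ 0) :=
        ((D_open τ₀).eventually_mem hζ₀).and (hcont.eventually (eventually_nhdsWithin_iff.1 hnz))
      rw [eventually_nhdsWithin_iff]
      filter_upwards [h1] with ξ hξ hξne
      obtain ⟨hξD, himp⟩ := hξ
      have hvne : v ξ ≠ v ζ₀ := by
        intro he
        have h2 := (hv_right cover ξ hξD).1
        rw [← hv] at h2 hwv
        rw [he, hwv] at h2
        exact hξne h2.symm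
      exact diffat_of_deriv hol inj cover ξ hξD (himp hvne)
    exact (Complex.analyticAt_of_differentiable_on_punctured_nhds_of_continuousAt
      hev hcont).differentiableAt





lemma vp_mem (hτ₀ : 0 < τ₀) {ζ : ℂ} (hζ : 0 < ζ.im) : ζ + Complex.I * τ₀ ∈ {z : ℂ | τ₀ < z.im} := by
  simp only [mem_setOf_eq, Complex.add_im, Complex.mul_im, Complex.I_re, Complex.I_im,
    Complex.ofReal_re, Complex.ofReal_im]
  linarith

lemma vp_maps (hτ₀ : 0 < τ₀) (cover : {z : ℂ | τ₀ < z.im} ⊆ w '' {z : ℂ | 0 < z.im}) :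
    MapsTo (fun ζ => invFunOn w {z : ℂ | 0 < z.im} (ζ + Complex.I * τ₀))
      {z : ℂ | 0 < z.im} {z : ℂ | 0 < z.im} := by
  intro ζ hζ
  exact (hv_right cover _ (vp_mem hτ₀ hζ)).2

lemma vp_diff (hτ₀ : 0 < τ₀) (hol : DifferentiableOn ℂ w {z : ℂ | 0 < z.im})
    (inj : Set.InjOn w {z : ℂ | 0 < z.im})
    (cover : {z : ℂ | τ₀ < z.im} ⊆ w '' {z : ℂ | 0 < z.im}) :
    DifferentiableOn ℂ (fun ζ => invFunOn w {z : ℂ | 0 < z.im} (ζ + Complex.I * τ₀))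
      {z : ℂ | 0 < z.im} := by
  intro ζ hζ
  have h1 : DifferentiableAt ℂ (invFunOn w {z : ℂ | 0 < z.im}) (ζ + Complex.I * τ₀) :=
    diff_v hol inj cover _ (vp_mem hτ₀ hζ)
  exact (h1.comp ζ ((differentiableAt_id.add_const _))).differentiableWithinAt

lemma v_norm (hτ₀ : 0 < τ₀) (hol : DifferentiableOn ℂ w {z : ℂ | 0 < z.im})
    (inj : Set.InjOn w {z : ℂ | 0 < z.im})
    (cover : {z : ℂ | τ₀ < z.im} ⊆ w '' {z : ℂ | 0 < z.im})
    (hnorm : Tendsto (fun y : ℝ => w (Complex.I * y) / (Complex.I * y)) atTop (nhds 1)) :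
    Tendsto (fun y : ℝ => invFunOn w {z : ℂ | 0 < z.im} (Complex.I * y) / (Complex.I * y))
      atTop (nhds 1) := by
  set v := invFunOn w {z : ℂ | 0 < z.im} with hv
  set c : ℝ → ℂ := fun y => w (Complex.I * y) / (Complex.I * y) with hc
  set u : ℝ → ℂ := fun y => v (Complex.I * y) / (Complex.I * y) with hu
  set s : ℝ → ℝ := fun y => ‖u y - 1‖ with hs
  set r : ℝ → ℂ := fun y => c y + 1 - 2 * (τ₀ : ℂ) / (y : ℂ) with hr
  have hd' := vp_diff hτ₀ hol inj cover
  have hm' := vp_maps hτ₀ cover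
  -- basic limits
  have hRe : Tendsto (fun y => (c y).re) atTop (nhds 1) := by
    have := (Complex.continuous_re.tendsto 1).comp hnorm
    exact this
  have hrlim : Tendsto (fun y => normSq (r y)) atTop (nhds 4) := by
    have h1 : Tendsto r atTop (nhds 2) := by
      have h2 : Tendsto (fun y : ℝ => 2 * (τ₀ : ℂ) / (y : ℂ)) atTop (nhds 0) := by
        simpa [div_eq_mul_inv] using tendsto_inv_coe.const_mul (2 * (τ₀ : ℂ))
      have h3 := (hnorm.add_const 1).sub h2
      norm_num at h3
      rw [hr]
      exact h3
    have h5 := (Complex.continuous_normSq.tendsto 2).comp h1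
    have h6 : normSq 2 = 4 := by norm_num [Complex.normSq_apply]
    rw [Function.comp_def, h6] at h5
    exact h5
  have hεlim : Tendsto (fun y => normSq (c y - 1)) atTop (nhds 0) := by
    have h1 : Tendsto (fun y => c y - 1) atTop (nhds 0) := by
      simpa using hnorm.sub_const 1
    have h5 := (Complex.continuous_normSq.tendsto 0).comp h1
    rw [Function.comp_def, map_zero] at h5
    exact h5
  -- eventual main inequality
  have hmain : ∀ᶠ y : ℝ in atTop,
      (s y) ^ 2 * normSq (r y) ≤ normSq (c y - 1) * (2 + s y) ^ 2 := by
    filter_upwards [eventually_gt_atTop (0 : ℝ), eventually_gt_atTop τ₀,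
      hRe.eventually (eventually_gt_nhds (by norm_num : (1/2 : ℝ) < 1)),
      eventually_gt_atTop (2 * τ₀)] with y hy0 hyτ hre hy2τ
    have hy' : (y : ℂ) ≠ 0 := by exact_mod_cast hy0.ne'
    have hIy : Complex.I * (y : ℂ) ≠ 0 := im_pos_ne_zero (im_I_mul_pos hy0)
    have hweq : w (Complex.I * y) = Complex.I * (y : ℂ) * c y := by
      rw [hc]; field_simp
    have hwim : (w (Complex.I * y)).im = y * (c y).re := by
      rw [hweq]
      have : Complex.I * (y : ℂ) * c y = (y : ℂ) * (c y * Complex.I) := by ring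
      rw [this]
      simp [Complex.mul_im]
    have hwD : τ₀ < (w (Complex.I * y)).im := by
      rw [hwim]; nlinarith
    have hIyD : Complex.I * (y : ℂ) ∈ {z : ℂ | 0 < z.im} := im_I_mul_pos hy0
    have hveq : v (Complex.I * y) = Complex.I * (y : ℂ) * u y := by
      rw [hu]; field_simp
    -- points
    set a' : ℂ := Complex.I * y - Complex.I * τ₀ with ha'def
    set b' : ℂ := w (Complex.I * y) - Complex.I * τ₀ with hb'def
    have ha' : 0 < a'.im := by
      rw [ha'def]
      simp only [Complex.sub_im, im_I_mul]
      linarith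
    have hb' : 0 < b'.im := by
      rw [hb'def]
      simp only [Complex.sub_im, im_I_mul]
      linarith
    have SP := schwarz_pick_ratio hd' hm' ha' hb'
    have hva : a' + Complex.I * (τ₀ : ℂ) = Complex.I * y := by rw [ha'def]; ring
    have hvb : b' + Complex.I * (τ₀ : ℂ) = w (Complex.I * y) := by rw [hb'def]; ring
    simp only [hva, hvb] at SP
    rw [hv_left inj _ hIyD] at SP
    -- SP : normSq (I y - v (I y)) * normSq (b' - conj a') ≤ normSq (b' - a') * normSq (I y - conj (v (I y)))
    have e1 : Complex.I * (y:ℂ) - v (Complex.I * y) = Complex.I * (y:ℂ) * (1 - u y) := by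
      rw [hveq]; ring
    have e2 : b' - (starRingEnd ℂ) a' = Complex.I * (y:ℂ) * r y := by
      have hconj : (starRingEnd ℂ) a' = -(Complex.I * y) + Complex.I * τ₀ := by
        rw [ha'def]
        simp [Complex.conj_I]
        try ring
      rw [hb'def, hconj, hweq, hr]
      field_simp
      try ring
    have e3 : b' - a' = Complex.I * (y:ℂ) * (c y - 1) := by
      rw [hb'def, ha'def, hweq]; ring
    have e4 : Complex.I * (y:ℂ) - (starRingEnd ℂ) (v (Complex.I * y))
        = Complex.I * (y:ℂ) * (1 + (starRingEnd ℂ) (u y)) := by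
      rw [hveq]
      simp [Complex.conj_I, Complex.conj_ofReal]
      ring
    have hnsqIy : normSq (Complex.I * (y:ℂ)) = y ^ 2 := by
      rw [normSq_mul, Complex.normSq_I, normSq_ofReal]; ring
    rw [e1, e2, e3, e4] at SP
    simp only [normSq_mul, Complex.normSq_I, normSq_ofReal] at SP
    have hy4 : (0:ℝ) < y ^ 4 := by positivity
    have SP2 : normSq (1 - u y) * normSq (r y) ≤ normSq (c y - 1) * normSq (1 + (starRingEnd ℂ) (u y)) := by
      have key : y ^ 4 * (normSq (1 - u y) * normSq (r y)) ≤
          y ^ 4 * (normSq (c y - 1) * normSq (1 + (starRingEnd ℂ) (u y))) := by nlinarith [SP]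
      exact (mul_le_mul_iff_right₀ hy4).mp key
    -- bound normSq (1 + conj u) ≤ (2 + s)^2
    have hsy : ‖-(1 - u y)‖ = s y := by rw [neg_sub]
    have hsy2 : ‖1 - u y‖ = s y := by
      rw [show (1 : ℂ) - u y = -(u y - 1) by ring, norm_neg]
    have habs : ‖1 + (starRingEnd ℂ) (u y)‖ ≤ 2 + s y := by
      have hcj : (1 : ℂ) + (starRingEnd ℂ) (u y) = (starRingEnd ℂ) (1 + u y) := by
        simp
      rw [hcj, Complex.norm_conj]
      have h2 : (1 : ℂ) + u y = 2 + -(1 - u y) := by ring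
      rw [h2]
      calc ‖2 + -(1 - u y)‖ ≤ ‖(2:ℂ)‖ + ‖-(1 - u y)‖ :=
            norm_add_le _ _
        _ = 2 + s y := by rw [hsy, Complex.norm_two]
    have hnsq1 : normSq (1 + (starRingEnd ℂ) (u y)) ≤ (2 + s y) ^ 2 := by
      rw [← Complex.sq_norm]
      have h0 : 0 ≤ ‖1 + (starRingEnd ℂ) (u y)‖ := norm_nonneg _
      nlinarith
    have hnsq2 : normSq (1 - u y) = (s y) ^ 2 := by
      rw [← Complex.sq_norm, hsy2]
    calc (s y) ^ 2 * normSq (r y) = normSq (1 - u y) * normSq (r y) := by rw [hnsq2]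
      _ ≤ normSq (c y - 1) * normSq (1 + (starRingEnd ℂ) (u y)) := SP2
      _ ≤ normSq (c y - 1) * (2 + s y) ^ 2 :=
          mul_le_mul_of_nonneg_left hnsq1 (normSq_nonneg _)
  -- squeeze
  have hsq : ∀ᶠ y : ℝ in atTop, (s y) ^ 2 ≤ 3 * normSq (c y - 1) := by
    filter_upwards [hmain, hrlim.eventually (eventually_gt_nhds (by norm_num : (3:ℝ) < 4)),
      hεlim.eventually (eventually_lt_nhds (by norm_num : (0:ℝ) < 1/8))] with y h1 h2 h3
    have hs0 : 0 ≤ s y := norm_nonneg _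
    have hε0 : 0 ≤ normSq (c y - 1) := normSq_nonneg _
    have hs1 : s y ≤ 1 := by nlinarith
    nlinarith
  have hS2 : Tendsto (fun y => (s y) ^ 2) atTop (nhds 0) := by
    have h3 : Tendsto (fun y => 3 * normSq (c y - 1)) atTop (nhds 0) := by
      simpa using hεlim.const_mul 3
    refine tendsto_of_tendsto_of_tendsto_of_le_of_le' tendsto_const_nhds h3 ?_ hsq
    exact Eventually.of_forall fun y => sq_nonneg _
  have hs0 : Tendsto s atTop (nhds 0) := by
    have h1 := (Real.continuous_sqrt.tendsto 0).comp hS2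
    simp only [Real.sqrt_zero] at h1
    refine h1.congr fun y => ?_
    simp only [Function.comp]
    exact Real.sqrt_sq (norm_nonneg _)
  rw [tendsto_iff_dist_tendsto_zero]
  refine hs0.congr fun y => ?_
  simp only [Complex.dist_eq, hs]




lemma vp_norm (hτ₀ : 0 < τ₀) (hol : DifferentiableOn ℂ w {z : ℂ | 0 < z.im})
    (inj : Set.InjOn w {z : ℂ | 0 < z.im})
    (cover : {z : ℂ | τ₀ < z.im} ⊆ w '' {z : ℂ | 0 < z.im})
    (hnorm : Tendsto (fun y : ℝ => w (Complex.I * y) / (Complex.I * y)) atTop (nhds 1)) :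
    Tendsto (fun y : ℝ =>
      (fun ζ => invFunOn w {z : ℂ | 0 < z.im} (ζ + Complex.I * τ₀)) (Complex.I * y)
        / (Complex.I * y)) atTop (nhds 1) := by
  set v := invFunOn w {z : ℂ | 0 < z.im} with hv
  have hu := v_norm hτ₀ hol inj cover hnorm
  have hcomp : Tendsto (fun y : ℝ => v (Complex.I * ((y + τ₀ : ℝ) : ℂ)) / (Complex.I * ((y + τ₀ : ℝ) : ℂ)))
      atTop (nhds 1) := hu.comp (tendsto_atTop_add_const_right atTop τ₀ tendsto_id)
  have hfrac : Tendsto (fun y : ℝ => 1 + (τ₀ : ℂ) * ((y : ℂ))⁻¹) atTop (nhds 1) := by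
    have := (tendsto_inv_coe.const_mul ((τ₀ : ℂ))).const_add (1 : ℂ)
    simpa using this
  have hmul := hcomp.mul hfrac
  rw [mul_one] at hmul
  refine hmul.congr' ?_
  filter_upwards [eventually_gt_atTop (0 : ℝ)] with y hy
  have hy' : (y : ℂ) ≠ 0 := by exact_mod_cast hy.ne'
  have hyτ : ((y + τ₀ : ℝ) : ℂ) ≠ 0 := by
    have : (0:ℝ) < y + τ₀ := by linarith
    exact_mod_cast this.ne'
  have harg : Complex.I * ((y + τ₀ : ℝ) : ℂ) = Complex.I * y + Complex.I * τ₀ := by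
    push_cast
    ring
  rw [harg]
  have h2 : (y : ℂ) + (τ₀ : ℂ) ≠ 0 := by
    have h3 : (0:ℝ) < y + τ₀ := by linarith
    exact_mod_cast h3.ne'
  push_cast
  field_simp [Complex.I_ne_zero]

theorem conformal_into_halfplane_shift_bound (τ₀ : ℝ) (hτ₀ : 0 < τ₀) (w : ℂ → ℂ)
    (hol : DifferentiableOn ℂ w {z : ℂ | 0 < z.im})
    (inj : Set.InjOn w {z : ℂ | 0 < z.im})
    (maps : Set.MapsTo w {z : ℂ | 0 < z.im} {z : ℂ | 0 < z.im})
    (cover : {z : ℂ | τ₀ < z.im} ⊆ w '' {z : ℂ | 0 < z.im})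
    (hnorm : Tendsto (fun y : ℝ => w (Complex.I * y) / (Complex.I * y)) atTop (nhds 1)) :
    ∀ z : ℂ, 0 < z.im → 0 ≤ (w z).im - z.im ∧ (w z).im - z.im ≤ τ₀ := by
  intro z hz
  have lower := julia_infty hol maps hnorm z hz
  refine ⟨by linarith, ?_⟩
  by_cases hcase : τ₀ < (w z).im
  · have hupper := julia_infty (vp_diff hτ₀ hol inj cover) (vp_maps hτ₀ cover)
      (vp_norm hτ₀ hol inj cover hnorm) (w z - Complex.I * τ₀) ?_
    · have harg : w z - Complex.I * (τ₀ : ℂ) + Complex.I * τ₀ = w z := by ring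
      simp only [harg] at hupper
      rw [hv_left inj z hz] at hupper
      have him : (w z - Complex.I * (τ₀ : ℂ)).im = (w z).im - τ₀ := by
        simp [Complex.sub_im, Complex.mul_im]
      rw [him] at hupper
      linarith
    · have him : (w z - Complex.I * (τ₀ : ℂ)).im = (w z).im - τ₀ := by
        simp [Complex.sub_im, Complex.mul_im]
      show 0 < (w z - Complex.I * (τ₀ : ℂ)).im
      rw [him]
      linarith
  · push_neg at hcase
    linarith


end Inv
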